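/- For every integer n ≥ 1, ∑_{k=1}^n (-1)^{k-1} μ(k) ⌊n/k⌋ = 1 + 2⌊log n / log 2⌋. -/

import Mathlib

open Finset ArithmeticFunction ArithmeticFunction.Moebius ArithmeticFunction.zeta

lemma moebius_sum_divisors (n : ℕ) :
    ∑ d ∈ n.divisors, (μ d : ℤ) = if n = 1 then 1 else 0 := by
  have h : (μ * ↑ζ : ArithmeticFunction ℤ) n = (1 : ArithmeticFunction ℤ) n := by
    rw [ArithmeticFunction.moebius_mul_coe_zeta]
  rwa [ArithmeticFunction.coe_mul_zeta_apply, ArithmeticFunction.one_apply] at h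

lemma odd_divisors_eq (n : ℕ) (hn : n ≠ 0) :
    n.divisors.filter (fun d => ¬ 2 ∣ d) = (ordCompl[2] n).divisors := by
  ext d
  simp only [Finset.mem_filter, Nat.mem_divisors]
  constructor
  · rintro ⟨⟨hd, _⟩, hodd⟩
    refine ⟨?_, (Nat.ordCompl_pos 2 hn).ne'⟩
    have hco : Nat.Coprime d (2 ^ n.factorization 2) :=
      Nat.Coprime.pow_right _ ((Nat.coprime_comm).mp
        ((Nat.Prime.coprime_iff_not_dvd Nat.prime_two).mpr hodd))
    exact hco.dvd_of_dvd_mul_left (by rw [Nat.ordProj_mul_ordCompl_eq_self n 2]; exact hd)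
  · rintro ⟨hd, _⟩
    refine ⟨⟨hd.trans (Nat.ordCompl_dvd n 2), hn⟩, fun h2 => ?_⟩
    exact Nat.not_dvd_ordCompl Nat.prime_two hn (h2.trans hd)

lemma ordCompl_two_pow (k : ℕ) : ordCompl[2] (2 ^ k) = 1 := by
  have h : (2 ^ k).factorization 2 = k := by
    rw [Nat.Prime.factorization_pow Nat.prime_two, Finsupp.single_eq_same]
  rw [h, Nat.div_self ((by positivity : 0 < 2 ^ k))]

lemma key_divisor_sum (n : ℕ) (hn : n ≠ 0) :
    ∑ d ∈ n.divisors, (-1 : ℤ) ^ (d - 1) * μ d =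
      2 * (if ordCompl[2] n = 1 then 1 else 0) - (if n = 1 then 1 else 0) := by
  have hsplit : ∑ d ∈ n.divisors, (-1 : ℤ) ^ (d - 1) * μ d
      = ∑ d ∈ n.divisors, ((μ d : ℤ) - 2 * (if 2 ∣ d then (μ d : ℤ) else 0)) := by
    refine Finset.sum_congr rfl fun d hd => ?_
    have hd1 : 1 ≤ d := Nat.pos_of_mem_divisors hd
    by_cases h2 : 2 ∣ d
    · have : Odd (d - 1) := ⟨d / 2 - 1, by omega⟩
      rw [this.neg_one_pow, if_pos h2]; ring
    · have : Even (d - 1) := by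
        have : Odd d := Nat.odd_iff.mpr (Nat.two_dvd_ne_zero.mp h2)
        obtain ⟨k, rfl⟩ := this
        exact ⟨k, by omega⟩
      rw [this.neg_one_pow, if_neg h2]; ring
  have hodd : ∑ d ∈ n.divisors.filter (fun d => ¬ 2 ∣ d), (μ d : ℤ)
      = if ordCompl[2] n = 1 then 1 else 0 := by
    rw [odd_divisors_eq n hn, moebius_sum_divisors]
  have heven : ∑ d ∈ n.divisors, (if 2 ∣ d then (μ d : ℤ) else 0)
      = (if n = 1 then 1 else 0) - (if ordCompl[2] n = 1 then 1 else 0) := by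
    have h1 := Finset.sum_filter_add_sum_filter_not n.divisors (fun d => 2 ∣ d)
      (fun d => (μ d : ℤ))
    rw [← Finset.sum_filter]
    have := moebius_sum_divisors n
    omega
  rw [hsplit, Finset.sum_sub_distrib, ← Finset.mul_sum, heven, moebius_sum_divisors]
  ring

lemma log_step (n : ℕ) (hn : 1 ≤ n) :
    (Nat.log 2 (n + 1) : ℤ) =
      Nat.log 2 n + (if ordCompl[2] (n + 1) = 1 then 1 else 0) := by
  by_cases h : ordCompl[2] (n + 1) = 1
  · rw [if_pos h]
    set a := (n + 1).factorization 2 with ha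
    have hpow : n + 1 = 2 ^ a := by
      conv_lhs => rw [← Nat.ordProj_mul_ordCompl_eq_self (n + 1) 2]
      rw [h, mul_one]
    have ha1 : 1 ≤ a := by
      by_contra hc
      have : a = 0 := by omega
      rw [this] at hpow; simp at hpow; omega
    have h1 : Nat.log 2 (n + 1) = a := by rw [hpow, Nat.log_pow one_lt_two]
    have h2 : Nat.log 2 n = a - 1 := by
      have hpa : 2 ^ a = 2 * 2 ^ (a - 1) := by
        conv_lhs => rw [show a = (a - 1) + 1 by omega]
        ring
      have hle : 1 ≤ 2 ^ (a - 1) := Nat.one_le_two_pow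
      exact Nat.log_eq_of_pow_le_of_lt_pow (by omega) (by omega)
    rw [h1, h2]; push_cast [ha1]; omega
  · rw [if_neg h]
    set b := Nat.log 2 n with hb
    have hb1 : 2 ^ b ≤ n := Nat.pow_log_le_self 2 (by omega)
    have hb2 : n < 2 ^ (b + 1) := Nat.lt_pow_succ_log_self one_lt_two n
    have hne : n + 1 ≠ 2 ^ (b + 1) := by
      intro hc
      exact h (by rw [hc, ordCompl_two_pow])
    have : Nat.log 2 (n + 1) = b :=
      Nat.log_eq_of_pow_le_of_lt_pow (by omega) (by omega)
    rw [this]; omega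

lemma main_nat : ∀ n : ℕ, 1 ≤ n →
    ∑ k ∈ Finset.Icc 1 n, (-1 : ℤ) ^ (k - 1) * μ k * (n / k : ℕ)
      = 1 + 2 * (Nat.log 2 n : ℤ) := by
  intro n
  induction n with
  | zero => omega
  | succ m ih =>
    intro _
    rcases Nat.eq_zero_or_pos m with rfl | hm
    · norm_num
    -- step
    have hstep : ∑ k ∈ Finset.Icc 1 (m + 1), (-1 : ℤ) ^ (k - 1) * μ k * ((m + 1) / k : ℕ)
        = (∑ k ∈ Finset.Icc 1 m, (-1 : ℤ) ^ (k - 1) * μ k * (m / k : ℕ))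
          + ∑ d ∈ (m + 1).divisors, (-1 : ℤ) ^ (d - 1) * μ d := by
      have h1 : ∀ k ∈ Finset.Icc 1 (m + 1),
          (-1 : ℤ) ^ (k - 1) * μ k * ((m + 1) / k : ℕ)
          = (-1 : ℤ) ^ (k - 1) * μ k * (m / k : ℕ)
            + (if k ∣ m + 1 then (-1 : ℤ) ^ (k - 1) * μ k else 0) := by
        intro k _
        rw [Nat.succ_div]
        push_cast
        split_ifs <;> ring
      rw [Finset.sum_congr rfl h1, Finset.sum_add_distrib]
      congr 1
      · rw [← Finset.insert_Icc_right_eq_Icc_add_one (by omega : 1 ≤ m + 1),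
          Finset.sum_insert (by simp)]
        rw [Nat.div_eq_of_lt (by omega)]
        simp
      · rw [← Finset.sum_filter]
        apply Finset.sum_congr _ (fun _ _ => rfl)
        ext d
        simp only [Nat.mem_divisors, Finset.mem_filter, Finset.mem_Icc]
        constructor
        · rintro ⟨⟨h1, h2⟩, h3⟩; exact ⟨h3, by omega⟩
        · rintro ⟨h1, _⟩
          refine ⟨⟨Nat.pos_of_dvd_of_pos h1 (by omega), Nat.le_of_dvd (by omega) h1⟩, h1⟩
    rw [hstep, ih hm, key_divisor_sum (m + 1) (by omega), log_step m hm]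
    have : (m + 1 = 1) = False := by simp; omega
    split_ifs with h1 <;> simp_all <;> ring

open ArithmeticFunction ArithmeticFunction.Moebius in
theorem stmt_19 (n : ℕ) (hn : 1 ≤ n) :
    ∑ k ∈ Finset.Icc 1 n, (-1 : ℤ) ^ (k - 1) * μ k * (n / k : ℕ) =
      1 + 2 * ⌊Real.log n / Real.log 2⌋ := by
  have hlog : ⌊Real.log n / Real.log 2⌋ = (Nat.log 2 n : ℤ) := by
    have h2 : Real.log (n : ℝ) / Real.log 2 = Real.logb 2 (n : ℝ) := rfl
    rw [h2, show ((2 : ℝ)) = ((2 : ℕ) : ℝ) by norm_num,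
      Real.floor_logb_natCast (by positivity), Int.log_natCast]
  rw [hlog]
  exact main_nat n hn
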